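/- The map w ↦ (w + w⁻¹)/2 is a bijection from the punctured open unit disc {w ∈ ℂ : 0 < |w| < 1} onto ℂ \ [−1,1], where [−1,1] denotes the real segment {x + 0i : −1 ≤ x ≤ 1} inside ℂ. -/

import Mathlib

/-- The map `w ↦ (w + w⁻¹)/2` is a bijection from the punctured open unit disc
`{w : 0 < |w| < 1}` onto `ℂ \ [-1,1]`, where `[-1,1]` is the real segment in `ℂ`. -/
theorem stmt_0 :
    Set.BijOn (fun w : ℂ => (w + w⁻¹) / 2)
      {w : ℂ | 0 < ‖w‖ ∧ ‖w‖ < 1}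
      {z : ℂ | ¬(z.im = 0 ∧ -1 ≤ z.re ∧ z.re ≤ 1)} := by
  refine ⟨?_, ?_, ?_⟩
  · -- MapsTo
    rintro w ⟨h0, h1⟩
    simp only [Set.mem_setOf_eq]
    rintro ⟨him, hre1, hre2⟩
    have hw : w ≠ 0 := by intro h; rw [h] at h0; simp at h0
    have hn0 : 0 < Complex.normSq w := Complex.normSq_pos.2 hw
    have hn1 : Complex.normSq w < 1 := by
      have := Complex.sq_norm w
      nlinarith [norm_nonneg w]
    set a := w.re with ha
    set b := w.im with hb
    have hnsq : Complex.normSq w = a^2 + b^2 := by rw [Complex.normSq_apply]; ring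
    have him' : ((w + w⁻¹)/2).im = (b + -b/(a^2+b^2))/2 := by
      simp [Complex.div_im, Complex.add_im, Complex.add_re, Complex.inv_im, Complex.inv_re,
        Complex.normSq_apply]
      ring
    have hre' : ((w + w⁻¹)/2).re = (a + a/(a^2+b^2))/2 := by
      simp [Complex.div_re, Complex.add_im, Complex.add_re, Complex.inv_im, Complex.inv_re,
        Complex.normSq_apply]
      ring
    rw [him'] at him
    rw [hre'] at hre1 hre2
    rw [hnsq] at hn0 hn1
    have hne : a^2 + b^2 ≠ 0 := ne_of_gt hn0
    have hb0 : b = 0 := by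
      have h2 : b * ((a^2+b^2) - 1) = 0 := by
        field_simp at him
        nlinarith [him]
      rcases mul_eq_zero.1 h2 with h | h
      · exact h
      · nlinarith
    rw [hb0] at hre1 hre2 hn0 hn1
    have ha0 : a ≠ 0 := by intro h; rw [h] at hn0; norm_num at hn0
    have hkey : a / (a^2+0^2) = 1/a := by field_simp; ring
    rw [hkey] at hre1 hre2
    have hu : a * (1/a) = 1 := by field_simp
    nlinarith [hre1, hre2, hu, sq_nonneg (a - 1/a), hn1,
      mul_nonneg (by linarith : (0:ℝ) ≤ 2 - (a + 1/a)) (by linarith : (0:ℝ) ≤ 2 + (a + 1/a))]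
  · -- InjOn
    rintro w ⟨hw0, hw1⟩ v ⟨hv0, hv1⟩ h
    simp only at h
    have hw : w ≠ 0 := by intro h'; rw [h'] at hw0; simp at hw0
    have hv : v ≠ 0 := by intro h'; rw [h'] at hv0; simp at hv0
    have key : (w - v) * (w * v - 1) = 0 := by
      field_simp at h
      linear_combination h
    rcases mul_eq_zero.1 key with h' | h'
    · exact sub_eq_zero.1 h'
    · exfalso
      have habs1 : ‖w * v‖ = 1 := by rw [sub_eq_zero.1 h']; simp
      rw [norm_mul] at habs1
      nlinarith [norm_nonneg w, norm_nonneg v]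
  · -- SurjOn
    rintro z hz
    simp only [Set.mem_setOf_eq] at hz
    obtain ⟨t, ht⟩ := IsAlgClosed.exists_eq_mul_self (z ^ 2 - 1)
    obtain ⟨s, hs⟩ : ∃ s : ℂ, s ^ 2 = z ^ 2 - 1 := ⟨t, by rw [ht]; ring⟩
    have hprod : (z + s) * (z - s) = 1 := by linear_combination -hs
    have hne1 : z + s ≠ 0 := left_ne_zero_of_mul_eq_one hprod
    have hne2 : z - s ≠ 0 := right_ne_zero_of_mul_eq_one hprod
    have habs : ‖z + s‖ * ‖z - s‖ = 1 := by
      rw [← norm_mul, hprod, norm_one]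
    rcases lt_trichotomy (‖z + s‖) 1 with h | h | h
    · refine ⟨z + s, ⟨norm_pos_iff.mpr hne1, h⟩, ?_⟩
      simp only
      rw [inv_eq_of_mul_eq_one_right hprod]
      ring
    · exfalso
      have hconj : (starRingEnd ℂ) (z + s) = z - s := by
        rw [← Complex.inv_eq_conj h, inv_eq_of_mul_eq_one_right hprod]
      have hc := Complex.add_conj (z + s)
      rw [hconj] at hc
      push_cast at hc
      have h2z : z = ((z + s).re : ℂ) :=
        mul_left_cancel₀ (two_ne_zero) (by linear_combination hc)
      have him0 : z.im = 0 := by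
        have := congrArg Complex.im h2z
        simpa using this
      have hre : z.re = (z + s).re := by
        have := congrArg Complex.re h2z
        simpa using this
      have hb := Complex.abs_re_le_norm (z + s)
      rw [h] at hb
      apply hz
      refine ⟨him0, ?_, ?_⟩
      · rw [hre]
        linarith [neg_abs_le (z + s).re]
      · rw [hre]
        linarith [le_abs_self (z + s).re]
    · refine ⟨z - s, ⟨norm_pos_iff.mpr hne2, ?_⟩, ?_⟩
      · nlinarith [norm_pos_iff.mpr hne2]
      · simp only
        rw [inv_eq_of_mul_eq_one_right (by linear_combination hprod : (z - s) * (z + s) = 1)]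
        ring
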